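/- For every a, b ∈ ℚ_p with a ≠ 0 there exist unique γ ∈ ℤ, j ∈ {1,…,p−1}, n ∈ R₀ and m ∈ {0,…,p−1} such that G(a,b)ψ = χ(m·p^{-1})·ψ_{γ n j} (equality of functions ℚ_p → ℂ). Moreover these parameters are characterized by: |a|_p = p^γ, |(a·|a|_p)^{-1} − j|_p ≤ p^{-1}, | |a|_p·b − n |_p ≤ 1, and | m − j·(n − |a|_p·b) |_p ≤ p^{-1} (where j, m and the rational number |a|_p are regarded as elements of ℚ_p). -/

import Mathlib

section helpers
variable (p : ℕ) [hp : Fact p.Prime]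

lemma pR_pos : (0:ℝ) < p := by exact_mod_cast hp.out.pos
lemma pR_one_lt : (1:ℝ) < p := by exact_mod_cast hp.out.one_lt

/-- digit extraction -/
lemma digit_exists (y : ℚ_[p]) (hy : ‖y‖ ≤ 1) :
    ∃ k : ℕ, k < p ∧ ‖y - (k : ℚ_[p])‖ ≤ ((p:ℝ))⁻¹ := by
  set z : ℤ_[p] := ⟨y, hy⟩ with hz
  refine ⟨z.appr 1, by simpa using z.appr_lt 1, ?_⟩
  have h1 : ‖z - (z.appr 1 : ℤ_[p])‖ ≤ (p:ℝ) ^ (-(1:ℕ) : ℤ) := by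
    rw [PadicInt.norm_le_pow_iff_mem_span_pow]
    exact z.appr_spec 1
  have h2 : ((z - (z.appr 1 : ℤ_[p]) : ℤ_[p]) : ℚ_[p]) = y - (z.appr 1 : ℚ_[p]) := by
    push_cast [hz]
    rfl
  calc ‖y - ((z.appr 1 : ℕ) : ℚ_[p])‖ = ‖z - (z.appr 1 : ℤ_[p])‖ := by
        rw [← PadicInt.padic_norm_e_of_padicInt, h2]
    _ ≤ (p:ℝ) ^ (-(1:ℕ) : ℤ) := h1
    _ = (p:ℝ)⁻¹ := by simp

/-- appr at level δ -/
lemma appr_general (y : ℚ_[p]) (δ : ℕ) (hy : ‖y‖ ≤ (p:ℝ) ^ (δ:ℤ)) :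
    ∃ K : ℕ, K < p ^ δ ∧ ‖y - (K : ℚ_[p]) / (p:ℚ_[p]) ^ (δ:ℕ)‖ ≤ 1 := by
  have hpQ : (p : ℚ_[p]) ≠ 0 := by exact_mod_cast hp.out.ne_zero
  have hyz : ‖(p:ℚ_[p]) ^ (δ:ℕ) * y‖ ≤ 1 := by
    rw [norm_mul, Padic.norm_p_pow]
    calc (p:ℝ) ^ (-(δ:ℕ) : ℤ) * ‖y‖ ≤ (p:ℝ) ^ (-(δ:ℕ) : ℤ) * (p:ℝ) ^ (δ:ℤ) := by
          apply mul_le_mul_of_nonneg_left hy (zpow_nonneg (le_of_lt (pR_pos p)) _)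
      _ = 1 := by
          rw [← zpow_add₀ (ne_of_gt (pR_pos p))]
          simp
  set z : ℤ_[p] := ⟨_, hyz⟩ with hz
  refine ⟨z.appr δ, z.appr_lt δ, ?_⟩
  have h1 : ‖z - (z.appr δ : ℤ_[p])‖ ≤ (p:ℝ) ^ (-(δ:ℕ) : ℤ) := by
    rw [PadicInt.norm_le_pow_iff_mem_span_pow]
    exact z.appr_spec δ
  have h2 : ((z - (z.appr δ : ℤ_[p]) : ℤ_[p]) : ℚ_[p]) = (p:ℚ_[p]) ^ (δ:ℕ) * y - (z.appr δ : ℚ_[p]) := by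
    push_cast [hz]; rfl
  have h3 : y - (z.appr δ : ℚ_[p]) / (p:ℚ_[p]) ^ (δ:ℕ)
      = ((p:ℚ_[p]) ^ (δ:ℕ) * y - (z.appr δ : ℚ_[p])) / (p:ℚ_[p]) ^ (δ:ℕ) := by
    field_simp
  rw [h3, norm_div, ← h2, PadicInt.padic_norm_e_of_padicInt, Padic.norm_p_pow]
  rw [div_le_one (by apply zpow_pos (pR_pos p))]
  exact h1

end helpers




open MeasureTheory

/-- Action of the `p`-adic affine group on complex-valued functions:
`(G(a,b)f)(x) = |a|_p^{-1/2} f((x-b)/a)`. -/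
noncomputable def Gact (p : ℕ) [Fact p.Prime] (a b : ℚ_[p]) (f : ℚ_[p] → ℂ) : ℚ_[p] → ℂ :=
  fun x => ((‖a‖ ^ (-(1/2) : ℝ) : ℝ) : ℂ) * f ((x - b) / a)

/-- `Ω(|x|_p)`: the indicator function of the unit ball `ℤ_p`. -/
noncomputable def Omega (p : ℕ) [Fact p.Prime] : ℚ_[p] → ℂ :=
  fun x => if ‖x‖ ≤ 1 then 1 else 0

/-- `R_σ`: the set of finite sums `∑_{l=-δ}^{σ-1} n_l p^l` with digits `n_l ∈ {0,…,p-1}`,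
a complete set of representatives of `ℚ_p / p^σ ℤ_p`. -/
def Rset (p : ℕ) [Fact p.Prime] (σ : ℤ) : Set ℚ_[p] :=
  { x | ∃ (δ : ℕ) (d : ℤ → ℕ), (∀ l, d l < p) ∧
      x = ∑ l ∈ Finset.Icc (-(δ : ℤ)) (σ - 1), (d l : ℚ_[p]) * (p : ℚ_[p]) ^ l }

/-- The `p`-adic wavelet `ψ_{γ n j}(x) = p^{-γ/2} χ(p⁻¹ j (p^γ x - n)) Ω(|p^γ x - n|_p)`. -/
noncomputable def wavelet (p : ℕ) [Fact p.Prime] (χ : ℚ_[p] → ℂ) (γ : ℤ) (n : ℚ_[p]) (j : ℕ) :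
    ℚ_[p] → ℂ :=
  fun x => (((p : ℝ) ^ (-(γ : ℝ) / 2) : ℝ) : ℂ) *
    χ ((p : ℚ_[p])⁻¹ * (j : ℚ_[p]) * ((p : ℚ_[p]) ^ γ * x - n)) *
    Omega p ((p : ℚ_[p]) ^ γ * x - n)

/-- The basic `p`-adic wavelet `ψ(x) = χ(p⁻¹ x) Ω(|x|_p)`. -/
noncomputable def psiw (p : ℕ) [Fact p.Prime] (χ : ℚ_[p] → ℂ) : ℚ_[p] → ℂ :=
  fun x => χ ((p : ℚ_[p])⁻¹ * x) * Omega p x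




section rsets
variable (p : ℕ) [hp : Fact p.Prime]


lemma cast_sum_eq (δ : ℕ) (d : ℤ → ℕ) :
    ∑ l ∈ Finset.Icc (-(δ:ℤ)) (-1), (d l : ℚ_[p]) * (p : ℚ_[p]) ^ l
      = ((∑ i ∈ Finset.range δ, d ((i:ℤ) - δ) * p ^ i : ℕ) : ℚ_[p]) / (p:ℚ_[p]) ^ (δ:ℕ) := by
  have hpQ : (p : ℚ_[p]) ≠ 0 := by exact_mod_cast hp.out.ne_zero
  have key := Finset.sum_nbij' (s := Finset.Icc (-(δ:ℤ)) (-1)) (t := Finset.range δ)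
    (f := fun l => (d l : ℚ_[p]) * (p : ℚ_[p]) ^ l)
    (g := fun i => (d ((i:ℤ) - δ) : ℚ_[p]) * (p : ℚ_[p]) ^ ((i:ℤ) - δ))
    (i := fun l => (l + δ).toNat) (j := fun i => (i:ℤ) - δ)
    (by intro a ha
        simp only [Finset.mem_Icc] at ha
        simp only [Finset.mem_range]
        omega)
    (by intro b hb
        simp only [Finset.mem_range] at hb
        simp only [Finset.mem_Icc]
        omega)
    (by intro a ha
        simp only [Finset.mem_Icc] at ha
        show (((a + (δ:ℤ)).toNat : ℤ)) - δ = a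
        omega)
    (by intro b hb
        simp only [Finset.mem_range] at hb
        show (((b:ℤ) - δ + δ).toNat) = b
        omega)
    (by intro a ha
        simp only [Finset.mem_Icc] at ha
        show (d a : ℚ_[p]) * (p:ℚ_[p]) ^ a
          = (d ((((a + (δ:ℤ)).toNat : ℕ):ℤ) - δ) : ℚ_[p]) * (p:ℚ_[p]) ^ ((((a + (δ:ℤ)).toNat : ℕ):ℤ) - δ)
        have e2 : (((a + (δ:ℤ)).toNat : ℕ):ℤ) - δ = a := by omega
        rw [e2])
  rw [key, eq_div_iff (pow_ne_zero _ hpQ), Finset.sum_mul]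
  push_cast
  apply Finset.sum_congr rfl
  intro i hi
  rw [← zpow_natCast (p:ℚ_[p]) δ, mul_assoc, ← zpow_add₀ hpQ, sub_add_cancel, zpow_natCast]

lemma natsum_lt (δ : ℕ) (c : ℕ → ℕ) (hc : ∀ i, c i < p) :
    ∑ i ∈ Finset.range δ, c i * p ^ i < p ^ δ := by
  induction δ with
  | zero => simp
  | succ δ ih =>
      rw [Finset.sum_range_succ, pow_succ]
      have h1 : c δ * p ^ δ ≤ (p - 1) * p ^ δ :=
        Nat.mul_le_mul_right _ (by have := hc δ; omega)
      have h2 : p ^ δ * p = (p - 1) * p ^ δ + p ^ δ := by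
        have hq : 1 ≤ p := hp.out.pos
        obtain ⟨q, rfl⟩ : ∃ q, p = q + 1 := ⟨p - 1, by omega⟩
        simp only [Nat.add_sub_cancel]
        ring
      omega

lemma natsum_digits (δ K : ℕ) (hK : K < p ^ δ) :
    ∑ i ∈ Finset.range δ, (K / p ^ i % p) * p ^ i = K := by
  induction δ generalizing K with
  | zero => simp at hK ⊢; omega
  | succ δ ih =>
      have hppos := hp.out.pos
      rw [Finset.sum_range_succ']
      have h1 : ∀ i, K / p ^ (i+1) % p * p ^ (i+1) = ((K/p) / p ^ i % p * p ^ i) * p := by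
        intro i
        rw [pow_succ', ← Nat.div_div_eq_div_mul]
        ring
      simp only [h1, pow_zero, Nat.div_one, mul_one]
      rw [← Finset.sum_mul, ih (K/p) (by rw [Nat.div_lt_iff_lt_mul hppos, ← pow_succ]; exact hK)]
      have h2 := Nat.div_add_mod K p
      have h3 : K / p * p = p * (K / p) := Nat.mul_comm _ _
      omega

lemma rset_zero_iff (x : ℚ_[p]) :
    x ∈ Rset p 0 ↔ ∃ δ K : ℕ, K < p ^ δ ∧ x = (K : ℚ_[p]) / (p:ℚ_[p]) ^ (δ:ℕ) := by
  constructor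
  · rintro ⟨δ, d, hd, rfl⟩
    refine ⟨δ, ∑ i ∈ Finset.range δ, d ((i:ℤ) - δ) * p ^ i, natsum_lt p δ _ (fun i => hd _), ?_⟩
    rw [show ((0:ℤ) - 1) = -1 by ring, cast_sum_eq]
  · rintro ⟨δ, K, hK, rfl⟩
    refine ⟨δ, fun l => if 0 ≤ l + δ then K / p ^ (l + δ).toNat % p else 0, ?_, ?_⟩
    · intro l
      dsimp only
      split
      · exact Nat.mod_lt _ hp.out.pos
      · exact hp.out.pos
    · rw [show ((0:ℤ) - 1) = -1 by ring, cast_sum_eq]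
      congr 1
      have hsum : ∀ i ∈ Finset.range δ,
          (fun l => if 0 ≤ l + (δ:ℤ) then K / p ^ (l + δ).toNat % p else 0) ((i:ℤ) - δ) * p ^ i
            = K / p ^ i % p * p ^ i := by
        intro i hi
        simp only [Finset.mem_range] at hi
        dsimp only
        rw [if_pos (by omega : (0:ℤ) ≤ (i:ℤ) - δ + δ), show ((i:ℤ) - δ + δ).toNat = i by omega]
      have h4 : (∑ i ∈ Finset.range δ,
          (fun l => if 0 ≤ l + (δ:ℤ) then K / p ^ (l + δ).toNat % p else 0) ((i:ℤ) - δ) * p ^ i) = K := by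
        rw [Finset.sum_congr rfl hsum]
        exact natsum_digits p δ K hK
      rw [h4]

end rsets



section rsu
variable (p : ℕ) [hp : Fact p.Prime]

lemma rset_unique_aux (δ₁ K₁ δ₂ K₂ : ℕ) (h1 : K₁ < p ^ δ₁) (h2 : K₂ < p ^ δ₂)
    (hle : δ₁ ≤ δ₂)
    (hnorm : ‖(K₁ : ℚ_[p]) / (p:ℚ_[p]) ^ (δ₁:ℕ) - (K₂ : ℚ_[p]) / (p:ℚ_[p]) ^ (δ₂:ℕ)‖ ≤ 1) :
    (K₁ : ℚ_[p]) / (p:ℚ_[p]) ^ (δ₁:ℕ) = (K₂ : ℚ_[p]) / (p:ℚ_[p]) ^ (δ₂:ℕ) := by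
  have hpQ : (p : ℚ_[p]) ≠ 0 := by exact_mod_cast hp.out.ne_zero
  set M : ℤ := (K₁ : ℤ) * p ^ (δ₂ - δ₁) - K₂ with hM
  have hpow : (p:ℕ) ^ δ₁ * p ^ (δ₂ - δ₁) = p ^ δ₂ := by
    rw [← pow_add]
    congr 1
    omega
  have hdiff : (K₁ : ℚ_[p]) / (p:ℚ_[p]) ^ (δ₁:ℕ) - (K₂ : ℚ_[p]) / (p:ℚ_[p]) ^ (δ₂:ℕ)
      = (M : ℚ_[p]) / (p:ℚ_[p]) ^ (δ₂:ℕ) := by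
    rw [hM]
    push_cast
    rw [div_sub_div _ _ (pow_ne_zero _ hpQ) (pow_ne_zero _ hpQ), sub_div, mul_div_assoc]
    have : ((p:ℚ_[p]) ^ (δ₂:ℕ)) = (p:ℚ_[p]) ^ (δ₁:ℕ) * (p:ℚ_[p]) ^ (δ₂ - δ₁ : ℕ) := by
      rw [← pow_add]; congr 1; omega
    rw [this]
    field_simp
  rw [hdiff] at hnorm
  rw [norm_div, Padic.norm_p_pow,
    div_le_one (by exact zpow_pos (by exact_mod_cast hp.out.pos) _)] at hnorm
  have hdvd : ((p:ℤ) ^ δ₂) ∣ M := (Padic.norm_int_le_pow_iff_dvd M δ₂).mp hnorm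
  have habs : |M| < (p:ℤ) ^ δ₂ := by
    rw [abs_lt]
    constructor
    · have : (0:ℤ) ≤ (K₁ : ℤ) * p ^ (δ₂ - δ₁) := by positivity
      have h2' : (K₂:ℤ) < (p:ℤ) ^ δ₂ := by exact_mod_cast h2
      omega
    · have h1' : (K₁:ℤ) * (p:ℤ) ^ (δ₂ - δ₁) < (p:ℤ) ^ δ₂ := by
        calc (K₁:ℤ) * (p:ℤ) ^ (δ₂ - δ₁) < (p:ℤ) ^ δ₁ * (p:ℤ) ^ (δ₂ - δ₁) := by
              apply mul_lt_mul_of_pos_right (by exact_mod_cast h1)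
              exact pow_pos (by exact_mod_cast hp.out.pos) _
          _ = (p:ℤ) ^ δ₂ := by exact_mod_cast congrArg (fun n : ℕ => (n:ℤ)) hpow
      have hK2 : (0:ℤ) ≤ (K₂:ℤ) := Int.natCast_nonneg _
      omega
  have hM0 : M = 0 := Int.eq_zero_of_abs_lt_dvd hdvd habs
  have : (K₁ : ℚ_[p]) * (p:ℚ_[p]) ^ (δ₂ - δ₁ : ℕ) = (K₂ : ℚ_[p]) := by
    have : ((K₁ : ℤ) * p ^ (δ₂ - δ₁) : ℤ) = (K₂ : ℤ) := by omega
    exact_mod_cast congrArg (fun z : ℤ => (z : ℚ_[p])) this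
  rw [← this]
  rw [show ((p:ℚ_[p]) ^ (δ₂:ℕ)) = (p:ℚ_[p]) ^ (δ₁:ℕ) * (p:ℚ_[p]) ^ (δ₂ - δ₁ : ℕ) by
    rw [← pow_add]; congr 1; omega]
  rw [mul_div_mul_right _ _ (pow_ne_zero _ hpQ)]

end rsu



section chi
variable (p : ℕ) [hp : Fact p.Prime]


variable (χ : ℚ_[p] → ℂ)

lemma chi_zero (hχ_triv : ∀ x : ℚ_[p], ‖x‖ ≤ 1 → χ x = 1) : χ 0 = 1 :=
  hχ_triv 0 (by simp)

lemma chi_ne (hχ_norm : ∀ x : ℚ_[p], ‖χ x‖ = 1) (x : ℚ_[p]) : χ x ≠ 0 := by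
  intro h
  have := hχ_norm x
  rw [h] at this
  simp at this

lemma chi_sub_eq_one (hχ_add : ∀ x y : ℚ_[p], χ (x + y) = χ x * χ y)
    (hχ_norm : ∀ x : ℚ_[p], ‖χ x‖ = 1)
    (x y : ℚ_[p]) (h : χ x = χ y) : χ (x - y) = 1 := by
  have h2 : χ (x - y) * χ y = χ x := by rw [← hχ_add]; ring_nf
  rw [h] at h2
  have := chi_ne p χ hχ_norm y
  field_simp at h2
  exact h2

lemma chi_natmul (hχ_add : ∀ x y : ℚ_[p], χ (x + y) = χ x * χ y)
    (hχ_triv : ∀ x : ℚ_[p], ‖x‖ ≤ 1 → χ x = 1)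
    (k : ℕ) (x : ℚ_[p]) : χ ((k:ℚ_[p]) * x) = χ x ^ k := by
  induction k with
  | zero => simp [chi_zero p χ hχ_triv]
  | succ k ih =>
      push_cast
      rw [add_mul, one_mul, hχ_add, ih, pow_succ]

lemma chi_root (hχ_add : ∀ x y : ℚ_[p], χ (x + y) = χ x * χ y)
    (hχ_norm : ∀ x : ℚ_[p], ‖χ x‖ = 1)
    (hχ_triv : ∀ x : ℚ_[p], ‖x‖ ≤ 1 → χ x = 1)
    (hχ_nontriv : χ ((p : ℚ_[p])⁻¹) ≠ 1)
    (y : ℚ_[p]) (hy : ‖y‖ ≤ 1) (h : χ ((p:ℚ_[p])⁻¹ * y) = 1) : ‖y‖ ≤ (p:ℝ)⁻¹ := by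
  have hpQ : (p : ℚ_[p]) ≠ 0 := by exact_mod_cast hp.out.ne_zero
  have h1lt := pR_one_lt p
  by_contra hcon
  push_neg at hcon
  have hy0 : y ≠ 0 := by
    intro h0
    rw [h0, norm_zero] at hcon
    have : (0:ℝ) < (p:ℝ)⁻¹ := by positivity
    linarith
  have hval := Padic.norm_eq_zpow_neg_valuation hy0
  have hv0 : y.valuation = 0 := by
    have hle : (p:ℝ) ^ (-y.valuation) ≤ (p:ℝ) ^ (0:ℤ) := by
      rw [zpow_zero, ← hval]; exact hy
    have hlt : (p:ℝ) ^ (-1:ℤ) < (p:ℝ) ^ (-y.valuation) := by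
      rw [← hval, zpow_neg_one]; exact hcon
    have e1 := (zpow_le_zpow_iff_right₀ h1lt).mp hle
    have e2 := (zpow_lt_zpow_iff_right₀ h1lt).mp hlt
    omega
  have hy1 : ‖y‖ = 1 := by rw [hval, hv0]; simp
  obtain ⟨k, hk, hknorm⟩ := digit_exists p y hy
  have hk0 : k ≠ 0 := by
    rintro rfl
    rw [Nat.cast_zero, sub_zero, hy1] at hknorm
    have : (p:ℝ)⁻¹ < 1 := inv_lt_one_of_one_lt₀ h1lt
    linarith
  have hsplit : (p:ℚ_[p])⁻¹ * y = (k:ℚ_[p]) * (p:ℚ_[p])⁻¹ + (p:ℚ_[p])⁻¹ * (y - k) := by ring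
  have hnorm2 : ‖(p:ℚ_[p])⁻¹ * (y - (k:ℚ_[p]))‖ ≤ 1 := by
    rw [norm_mul, norm_inv, Padic.norm_p, inv_inv]
    calc (p:ℝ) * ‖y - (k:ℚ_[p])‖ ≤ (p:ℝ) * (p:ℝ)⁻¹ :=
          mul_le_mul_of_nonneg_left hknorm (le_of_lt (pR_pos p))
      _ = 1 := mul_inv_cancel₀ (ne_of_gt (pR_pos p))
  have hk1 : χ ((k:ℚ_[p]) * (p:ℚ_[p])⁻¹) = 1 := by
    rw [hsplit, hχ_add, hχ_triv _ hnorm2, mul_one] at h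
    exact h
  rw [chi_natmul p χ hχ_add hχ_triv] at hk1
  have hζp : χ ((p:ℚ_[p])⁻¹) ^ p = 1 := by
    rw [← chi_natmul p χ hχ_add hχ_triv, mul_inv_cancel₀ hpQ, hχ_triv 1 (by simp)]
  have hord : orderOf (χ ((p:ℚ_[p])⁻¹)) = p := by
    have hdvd := orderOf_dvd_of_pow_eq_one hζp
    rcases hp.out.eq_one_or_self_of_dvd _ hdvd with h1 | h1
    · exact absurd (orderOf_eq_one_iff.mp h1) hχ_nontriv
    · exact h1
  have hdvdk : p ∣ k := hord ▸ orderOf_dvd_of_pow_eq_one hk1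
  have := Nat.le_of_dvd (Nat.pos_of_ne_zero hk0) hdvdk
  omega

end chi

section main
variable (p : ℕ) [hp : Fact p.Prime]

lemma rset_unique {n₁ n₂ : ℚ_[p]} (h₁ : n₁ ∈ Rset p 0) (h₂ : n₂ ∈ Rset p 0)
    (h : ‖n₁ - n₂‖ ≤ 1) : n₁ = n₂ := by
  obtain ⟨δ₁, K₁, hK₁, rfl⟩ := (rset_zero_iff p n₁).mp h₁
  obtain ⟨δ₂, K₂, hK₂, rfl⟩ := (rset_zero_iff p n₂).mp h₂
  rcases le_total δ₁ δ₂ with hle | hle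
  · exact rset_unique_aux p δ₁ K₁ δ₂ K₂ hK₁ hK₂ hle h
  · exact (rset_unique_aux p δ₂ K₂ δ₁ K₁ hK₂ hK₁ hle (by rwa [← norm_neg, neg_sub])).symm

lemma rset_exists (y : ℚ_[p]) : ∃ n ∈ Rset p 0, ‖y - n‖ ≤ 1 := by
  obtain ⟨δ, hδ⟩ : ∃ δ : ℕ, ‖y‖ ≤ (p:ℝ) ^ (δ:ℤ) := by
    by_cases hy : y = 0
    · exact ⟨0, by simp [hy]⟩
    · refine ⟨(-y.valuation).toNat, ?_⟩
      rw [Padic.norm_eq_zpow_neg_valuation hy]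
      exact zpow_le_zpow_right₀ (le_of_lt (pR_one_lt p)) (Int.self_le_toNat _)
  obtain ⟨K, hK, hKnorm⟩ := appr_general p y δ hδ
  exact ⟨(K : ℚ_[p]) / (p:ℚ_[p]) ^ (δ:ℕ), (rset_zero_iff p _).mpr ⟨δ, K, hK, rfl⟩, hKnorm⟩

variable (χ : ℚ_[p] → ℂ)

lemma const_eq {a : ℚ_[p]} {γ : ℤ} (h : ‖a‖ = (p:ℝ) ^ γ) :
    ‖a‖ ^ (-(1/2) : ℝ) = (p:ℝ) ^ (-(γ:ℝ) / 2) := by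
  rw [h, ← Real.rpow_intCast (p:ℝ) γ, ← Real.rpow_mul (le_of_lt (pR_pos p))]
  congr 1
  push_cast
  ring

lemma const_eq_rev {a : ℚ_[p]} {γ : ℤ} (ha : a ≠ 0)
    (h : ‖a‖ ^ (-(1/2) : ℝ) = (p:ℝ) ^ (-(γ:ℝ) / 2)) : ‖a‖ = (p:ℝ) ^ γ := by
  calc ‖a‖ = (‖a‖ ^ (-(1/2):ℝ)) ^ (-2:ℝ) := by
        rw [← Real.rpow_mul (norm_nonneg a)]
        norm_num
    _ = ((p:ℝ) ^ (-(γ:ℝ)/2)) ^ (-2:ℝ) := by rw [h]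
    _ = (p:ℝ) ^ ((γ:ℝ)) := by
        rw [← Real.rpow_mul (le_of_lt (pR_pos p))]
        congr 1
        ring
    _ = (p:ℝ) ^ γ := Real.rpow_intCast _ _

lemma padic_sub_le (x y : ℚ_[p]) : ‖x - y‖ ≤ max ‖x‖ ‖y‖ := by
  rw [sub_eq_add_neg]
  refine le_trans (Padic.nonarchimedean _ _) ?_
  rw [norm_neg]

theorem main_iff
    (hχ_add : ∀ x y : ℚ_[p], χ (x + y) = χ x * χ y)
    (hχ_norm : ∀ x : ℚ_[p], ‖χ x‖ = 1)
    (hχ_triv : ∀ x : ℚ_[p], ‖x‖ ≤ 1 → χ x = 1)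
    (hχ_nontriv : χ ((p : ℚ_[p])⁻¹) ≠ 1)
    (a b : ℚ_[p]) (ha : a ≠ 0) (γ : ℤ) (j : ℕ) (n : ℚ_[p]) (m : ℕ) :
    (Gact p a b (psiw p χ) =
        fun x => χ ((m : ℚ_[p]) * (p : ℚ_[p])⁻¹) * wavelet p χ γ n j x) ↔
      (‖a‖ = (p : ℝ) ^ γ ∧
       ‖(a * (p : ℚ_[p]) ^ γ)⁻¹ - (j : ℚ_[p])‖ ≤ (p : ℝ) ^ (-1 : ℤ) ∧
       ‖(p : ℚ_[p]) ^ γ * b - n‖ ≤ 1 ∧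
       ‖(m : ℚ_[p]) - (j : ℚ_[p]) * (n - (p : ℚ_[p]) ^ γ * b)‖ ≤ (p : ℝ) ^ (-1 : ℤ)) := by
  have hpQ : (p:ℚ_[p]) ≠ 0 := by exact_mod_cast hp.out.ne_zero
  have hpR0 : (p:ℝ) ≠ 0 := ne_of_gt (pR_pos p)
  have hP : (p:ℚ_[p]) ^ γ ≠ 0 := zpow_ne_zero _ hpQ
  have hjle : ‖(j:ℚ_[p])‖ ≤ 1 := by
    have := Padic.norm_int_le_one (p := p) (j : ℤ)
    push_cast at this
    exact this
  have hmle : ‖(m:ℚ_[p])‖ ≤ 1 := by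
    have := Padic.norm_int_le_one (p := p) (m : ℤ)
    push_cast at this
    exact this
  have hpinv : ‖(p:ℚ_[p])⁻¹‖ = (p:ℝ) := by rw [norm_inv, Padic.norm_p, inv_inv]
  constructor
  · -- backward: equality ⇒ conditions
    intro heq
    have hca : (0:ℝ) < ‖a‖ ^ (-(1/2):ℝ) := Real.rpow_pos_of_pos (norm_pos_iff.mpr ha) _
    have hcg : (0:ℝ) < (p:ℝ) ^ (-(γ:ℝ)/2) := Real.rpow_pos_of_pos (pR_pos p) _
    have hc0 : (((p:ℝ)^(-(γ:ℝ)/2) : ℝ) : ℂ) ≠ 0 := Complex.ofReal_ne_zero.mpr (ne_of_gt hcg)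
    have hb := congrFun heq b
    simp only [Gact, psiw, wavelet, Omega] at hb
    rw [sub_self, zero_div, mul_zero, chi_zero p χ hχ_triv, norm_zero, if_pos zero_le_one] at hb
    simp only [one_mul, mul_one] at hb
    have h3 : ‖(p:ℚ_[p]) ^ γ * b - n‖ ≤ 1 := by
      by_contra hcon
      rw [if_neg hcon, mul_zero, mul_zero] at hb
      exact (Complex.ofReal_ne_zero.mpr (ne_of_gt hca)) hb
    rw [if_pos h3, mul_one] at hb
    have habs := congrArg norm hb
    rw [norm_mul, norm_mul, Complex.norm_real, Complex.norm_real, hχ_norm, hχ_norm,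
      Real.norm_of_nonneg hca.le, Real.norm_of_nonneg hcg.le, one_mul, mul_one] at habs
    have h1 : ‖a‖ = (p:ℝ) ^ γ := const_eq_rev p ha habs
    rw [const_eq p h1] at hb
    have hunit : χ ((m:ℚ_[p]) * (p:ℚ_[p])⁻¹) *
        χ ((p:ℚ_[p])⁻¹ * (j:ℚ_[p]) * ((p:ℚ_[p]) ^ γ * b - n)) = 1 := by
      apply mul_right_cancel₀ hc0
      rw [one_mul]
      linear_combination -hb
    have hnb : ‖n - (p:ℚ_[p]) ^ γ * b‖ ≤ 1 := by rw [← norm_neg, neg_sub]; exact h3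
    have hbound : ‖(m:ℚ_[p]) - (j:ℚ_[p]) * (n - (p:ℚ_[p]) ^ γ * b)‖ ≤ 1 := by
      refine le_trans (padic_sub_le p _ _) (max_le hmle ?_)
      calc ‖(j:ℚ_[p]) * (n - (p:ℚ_[p]) ^ γ * b)‖ = ‖(j:ℚ_[p])‖ * ‖n - (p:ℚ_[p]) ^ γ * b‖ :=
            norm_mul _ _
        _ ≤ 1 * 1 := mul_le_mul hjle hnb (norm_nonneg _) zero_le_one
        _ = 1 := one_mul 1
    have hunit2 : χ ((p:ℚ_[p])⁻¹ * ((m:ℚ_[p]) - (j:ℚ_[p]) * (n - (p:ℚ_[p]) ^ γ * b))) = 1 := by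
      rw [show (p:ℚ_[p])⁻¹ * ((m:ℚ_[p]) - (j:ℚ_[p]) * (n - (p:ℚ_[p]) ^ γ * b))
          = (m:ℚ_[p]) * (p:ℚ_[p])⁻¹ + (p:ℚ_[p])⁻¹ * (j:ℚ_[p]) * ((p:ℚ_[p]) ^ γ * b - n)
          from by ring, hχ_add]
      exact hunit
    have h4 : ‖(m:ℚ_[p]) - (j:ℚ_[p]) * (n - (p:ℚ_[p]) ^ γ * b)‖ ≤ (p:ℝ) ^ (-1:ℤ) := by
      rw [zpow_neg_one]
      exact chi_root p χ hχ_add hχ_norm hχ_triv hχ_nontriv _ hbound hunit2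
    -- second evaluation point
    have hu1 : ‖(a * (p:ℚ_[p]) ^ γ)⁻¹‖ = 1 := by
      rw [norm_inv, norm_mul, h1, Padic.norm_p_zpow, ← zpow_add₀ hpR0, add_neg_cancel,
        zpow_zero, inv_one]
    have hx := congrFun heq (b + ((p:ℚ_[p]) ^ γ)⁻¹)
    simp only [Gact, psiw, wavelet, Omega] at hx
    rw [show (b + ((p:ℚ_[p]) ^ γ)⁻¹ - b) / a = (a * (p:ℚ_[p]) ^ γ)⁻¹ from by
        rw [add_sub_cancel_left, div_eq_mul_inv, ← mul_inv, mul_comm]] at hx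
    rw [show (p:ℚ_[p]) ^ γ * (b + ((p:ℚ_[p]) ^ γ)⁻¹) - n = ((p:ℚ_[p]) ^ γ * b - n) + 1 from by
        rw [mul_add, mul_inv_cancel₀ hP]; ring] at hx
    rw [if_pos (le_of_eq hu1), if_pos (le_trans (Padic.nonarchimedean _ _)
        (max_le h3 (by simp))), mul_one, mul_one, const_eq p h1] at hx
    rw [show χ ((p:ℚ_[p])⁻¹ * (j:ℚ_[p]) * ((p:ℚ_[p]) ^ γ * b - n + 1))
        = χ ((p:ℚ_[p])⁻¹ * (j:ℚ_[p]) * ((p:ℚ_[p]) ^ γ * b - n)) * χ ((p:ℚ_[p])⁻¹ * (j:ℚ_[p]))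
        from by rw [← hχ_add]; congr 1; ring] at hx
    have hxx : χ ((p:ℚ_[p])⁻¹ * (a * (p:ℚ_[p]) ^ γ)⁻¹) = χ ((p:ℚ_[p])⁻¹ * (j:ℚ_[p])) := by
      apply mul_left_cancel₀ hc0
      linear_combination hx + ((((p:ℝ)^(-(γ:ℝ)/2) : ℝ) : ℂ) * χ ((p:ℚ_[p])⁻¹ * (j:ℚ_[p]))) * hunit
    have hsub := chi_sub_eq_one p χ hχ_add hχ_norm _ _ hxx
    rw [show (p:ℚ_[p])⁻¹ * (a * (p:ℚ_[p]) ^ γ)⁻¹ - (p:ℚ_[p])⁻¹ * (j:ℚ_[p])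
        = (p:ℚ_[p])⁻¹ * ((a * (p:ℚ_[p]) ^ γ)⁻¹ - (j:ℚ_[p])) from by ring] at hsub
    have hbound2 : ‖(a * (p:ℚ_[p]) ^ γ)⁻¹ - (j:ℚ_[p])‖ ≤ 1 :=
      le_trans (padic_sub_le p _ _) (max_le (le_of_eq hu1) hjle)
    have h2 : ‖(a * (p:ℚ_[p]) ^ γ)⁻¹ - (j:ℚ_[p])‖ ≤ (p:ℝ) ^ (-1:ℤ) := by
      rw [zpow_neg_one]
      exact chi_root p χ hχ_add hχ_norm hχ_triv hχ_nontriv _ hbound2 hsub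
    exact ⟨h1, h2, h3, h4⟩
  · -- forward: conditions ⇒ equality
    rintro ⟨h1, h2, h3, h4⟩
    rw [zpow_neg_one] at h2 h4
    have hu1 : ‖(a * (p:ℚ_[p]) ^ γ)⁻¹‖ = 1 := by
      rw [norm_inv, norm_mul, h1, Padic.norm_p_zpow, ← zpow_add₀ hpR0, add_neg_cancel,
        zpow_zero, inv_one]
    funext x
    have hut : (x - b) / a = (a * (p:ℚ_[p]) ^ γ)⁻¹ * ((p:ℚ_[p]) ^ γ * x - (p:ℚ_[p]) ^ γ * b) := by
      field_simp
    by_cases hc : ‖(p:ℚ_[p]) ^ γ * x - (p:ℚ_[p]) ^ γ * b‖ ≤ 1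
    · have hOm1 : ‖(x - b)/a‖ ≤ 1 := by rw [hut, norm_mul, hu1, one_mul]; exact hc
      have hOm2 : ‖(p:ℚ_[p]) ^ γ * x - n‖ ≤ 1 := by
        rw [show (p:ℚ_[p]) ^ γ * x - n
            = ((p:ℚ_[p]) ^ γ * x - (p:ℚ_[p]) ^ γ * b) + ((p:ℚ_[p]) ^ γ * b - n) from by ring]
        exact le_trans (Padic.nonarchimedean _ _) (max_le hc h3)
      simp only [Gact, psiw, wavelet, Omega]
      rw [if_pos hOm1, if_pos hOm2, mul_one, mul_one, const_eq p h1, hut]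
      have hz : ‖(p:ℚ_[p])⁻¹ * (((a * (p:ℚ_[p]) ^ γ)⁻¹ - (j:ℚ_[p]))
            * ((p:ℚ_[p]) ^ γ * x - (p:ℚ_[p]) ^ γ * b))
          - (p:ℚ_[p])⁻¹ * ((m:ℚ_[p]) - (j:ℚ_[p]) * (n - (p:ℚ_[p]) ^ γ * b))‖ ≤ 1 := by
        refine le_trans (padic_sub_le p _ _) (max_le ?_ ?_)
        · rw [norm_mul, hpinv, norm_mul]
          calc (p:ℝ) * (‖(a * (p:ℚ_[p]) ^ γ)⁻¹ - (j:ℚ_[p])‖ * ‖(p:ℚ_[p]) ^ γ * x - (p:ℚ_[p]) ^ γ * b‖)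
              ≤ (p:ℝ) * ((p:ℝ)⁻¹ * 1) := by
                apply mul_le_mul_of_nonneg_left _ (le_of_lt (pR_pos p))
                exact mul_le_mul h2 hc (norm_nonneg _) (by positivity)
            _ = 1 := by field_simp
        · rw [norm_mul, hpinv]
          calc (p:ℝ) * ‖(m:ℚ_[p]) - (j:ℚ_[p]) * (n - (p:ℚ_[p]) ^ γ * b)‖ ≤ (p:ℝ) * (p:ℝ)⁻¹ :=
                mul_le_mul_of_nonneg_left h4 (le_of_lt (pR_pos p))
            _ = 1 := mul_inv_cancel₀ hpR0
      have key : χ ((p:ℚ_[p])⁻¹ * ((a * (p:ℚ_[p]) ^ γ)⁻¹ * ((p:ℚ_[p]) ^ γ * x - (p:ℚ_[p]) ^ γ * b)))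
          = χ ((m:ℚ_[p]) * (p:ℚ_[p])⁻¹) * χ ((p:ℚ_[p])⁻¹ * (j:ℚ_[p]) * ((p:ℚ_[p]) ^ γ * x - n)) := by
        rw [show (p:ℚ_[p])⁻¹ * ((a * (p:ℚ_[p]) ^ γ)⁻¹ * ((p:ℚ_[p]) ^ γ * x - (p:ℚ_[p]) ^ γ * b))
            = ((m:ℚ_[p]) * (p:ℚ_[p])⁻¹ + (p:ℚ_[p])⁻¹ * (j:ℚ_[p]) * ((p:ℚ_[p]) ^ γ * x - n))
              + ((p:ℚ_[p])⁻¹ * (((a * (p:ℚ_[p]) ^ γ)⁻¹ - (j:ℚ_[p]))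
                  * ((p:ℚ_[p]) ^ γ * x - (p:ℚ_[p]) ^ γ * b))
                - (p:ℚ_[p])⁻¹ * ((m:ℚ_[p]) - (j:ℚ_[p]) * (n - (p:ℚ_[p]) ^ γ * b))) from by ring,
          hχ_add, hχ_add, hχ_triv _ hz, mul_one]
      rw [key]
      ring
    · have hOm1 : ¬ ‖(x - b)/a‖ ≤ 1 := by rw [hut, norm_mul, hu1, one_mul]; exact hc
      have hOm2 : ¬ ‖(p:ℚ_[p]) ^ γ * x - n‖ ≤ 1 := by
        intro hcon
        apply hc
        rw [show (p:ℚ_[p]) ^ γ * x - (p:ℚ_[p]) ^ γ * b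
            = ((p:ℚ_[p]) ^ γ * x - n) - ((p:ℚ_[p]) ^ γ * b - n) from by ring]
        exact le_trans (padic_sub_le p _ _) (max_le hcon h3)
      simp only [Gact, psiw, wavelet, Omega]
      rw [if_neg hOm1, if_neg hOm2, mul_zero, mul_zero, mul_zero, mul_zero]

end main

set_option maxHeartbeats 1000000 in
theorem stmt_2 (p : ℕ) [Fact p.Prime] (χ : ℚ_[p] → ℂ)
    (hχ_add : ∀ x y : ℚ_[p], χ (x + y) = χ x * χ y)
    (hχ_norm : ∀ x : ℚ_[p], ‖χ x‖ = 1)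
    (hχ_triv : ∀ x : ℚ_[p], ‖x‖ ≤ 1 → χ x = 1)
    (hχ_nontriv : χ ((p : ℚ_[p])⁻¹) ≠ 1)
    (a b : ℚ_[p]) (ha : a ≠ 0) :
    (∃! q : ℤ × ℕ × ℚ_[p] × ℕ,
      (1 ≤ q.2.1 ∧ q.2.1 ≤ p - 1) ∧ q.2.2.1 ∈ Rset p 0 ∧ q.2.2.2 ≤ p - 1 ∧
      Gact p a b (psiw p χ) =
        fun x => χ ((q.2.2.2 : ℚ_[p]) * (p : ℚ_[p])⁻¹) * wavelet p χ q.1 q.2.2.1 q.2.1 x) ∧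
    (∀ (γ : ℤ) (j : ℕ) (n : ℚ_[p]) (m : ℕ),
      (1 ≤ j ∧ j ≤ p - 1) → n ∈ Rset p 0 → m ≤ p - 1 →
      ((Gact p a b (psiw p χ) =
          fun x => χ ((m : ℚ_[p]) * (p : ℚ_[p])⁻¹) * wavelet p χ γ n j x) ↔
        (‖a‖ = (p : ℝ) ^ γ ∧
         ‖(a * (p : ℚ_[p]) ^ γ)⁻¹ - (j : ℚ_[p])‖ ≤ (p : ℝ) ^ (-1 : ℤ) ∧
         ‖(p : ℚ_[p]) ^ γ * b - n‖ ≤ 1 ∧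
         ‖(m : ℚ_[p]) - (j : ℚ_[p]) * (n - (p : ℚ_[p]) ^ γ * b)‖ ≤ (p : ℝ) ^ (-1 : ℤ)))) := by
  have hpQ : (p:ℚ_[p]) ≠ 0 := by exact_mod_cast Fact.out (p := p.Prime) |>.ne_zero
  have hpR0 : (p:ℝ) ≠ 0 := ne_of_gt (pR_pos p)
  have h1lt := pR_one_lt p
  have hpinvlt : (p:ℝ)^(-1:ℤ) < 1 := by rw [zpow_neg_one]; exact inv_lt_one_of_one_lt₀ h1lt
  obtain ⟨γ, hC1⟩ : ∃ γ : ℤ, ‖a‖ = (p:ℝ) ^ γ :=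
    ⟨-a.valuation, Padic.norm_eq_zpow_neg_valuation ha⟩
  have hP : (p:ℚ_[p]) ^ γ ≠ 0 := zpow_ne_zero _ hpQ
  have hu1 : ‖(a * (p:ℚ_[p]) ^ γ)⁻¹‖ = 1 := by
    rw [norm_inv, norm_mul, hC1, Padic.norm_p_zpow, ← zpow_add₀ hpR0, add_neg_cancel,
      zpow_zero, inv_one]
  obtain ⟨j, hjp, hjnorm⟩ := digit_exists p ((a * (p:ℚ_[p]) ^ γ)⁻¹) (le_of_eq hu1)
  have hC2 : ‖(a * (p:ℚ_[p]) ^ γ)⁻¹ - (j:ℚ_[p])‖ ≤ (p:ℝ) ^ (-1:ℤ) := by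
    rw [zpow_neg_one]; exact hjnorm
  have hj1 : 1 ≤ j := by
    rcases Nat.eq_zero_or_pos j with rfl | h
    · exfalso
      rw [Nat.cast_zero, sub_zero, hu1] at hjnorm
      have := inv_lt_one_of_one_lt₀ h1lt
      linarith
    · exact h
  obtain ⟨n, hnR, hC3⟩ := rset_exists p ((p:ℚ_[p]) ^ γ * b)
  have hjle : ‖(j:ℚ_[p])‖ ≤ 1 := by
    have := Padic.norm_int_le_one (p := p) (j : ℤ)
    push_cast at this
    exact this
  have hnb : ‖n - (p:ℚ_[p]) ^ γ * b‖ ≤ 1 := by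
    rw [← norm_neg, neg_sub]; exact hC3
  have hwnorm : ‖(j:ℚ_[p]) * (n - (p:ℚ_[p]) ^ γ * b)‖ ≤ 1 := by
    rw [norm_mul]
    calc ‖(j:ℚ_[p])‖ * ‖n - (p:ℚ_[p]) ^ γ * b‖ ≤ 1 * 1 :=
          mul_le_mul hjle hnb (norm_nonneg _) zero_le_one
      _ = 1 := one_mul 1
  obtain ⟨m, hmp, hmnorm⟩ := digit_exists p ((j:ℚ_[p]) * (n - (p:ℚ_[p]) ^ γ * b)) hwnorm
  have hC4 : ‖(m:ℚ_[p]) - (j:ℚ_[p]) * (n - (p:ℚ_[p]) ^ γ * b)‖ ≤ (p:ℝ) ^ (-1:ℤ) := by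
    rw [zpow_neg_one, ← norm_neg, neg_sub]
    exact hmnorm
  have heq := (main_iff p χ hχ_add hχ_norm hχ_triv hχ_nontriv a b ha γ j n m).mpr
    ⟨hC1, hC2, hC3, hC4⟩
  have hp2 : 2 ≤ p := Fact.out (p := p.Prime) |>.two_le
  constructor
  · refine ⟨(γ, j, n, m), ⟨⟨hj1, by show j ≤ p - 1; omega⟩, hnR, by show m ≤ p - 1; omega, heq⟩, ?_⟩
    rintro ⟨γ', j', n', m'⟩ ⟨⟨hj'1, hj'le⟩, hn'R, hm'le, heq'⟩
    dsimp only at hj'1 hj'le hn'R hm'le heq'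
    obtain ⟨hC1', hC2', hC3', hC4'⟩ :=
      (main_iff p χ hχ_add hχ_norm hχ_triv hχ_nontriv a b ha γ' j' n' m').mp heq'
    have hγeq : γ' = γ := by
      have h := hC1'.symm.trans hC1
      exact zpow_right_injective₀ (pR_pos p) (ne_of_gt h1lt) h
    rw [hγeq] at hC2' hC3' hC4'
    have hjj : ‖((j':ℚ_[p])) - (j:ℚ_[p])‖ ≤ (p:ℝ) ^ (-1:ℤ) := by
      rw [show (j':ℚ_[p]) - (j:ℚ_[p])
          = ((a * (p:ℚ_[p]) ^ γ)⁻¹ - (j:ℚ_[p])) - ((a * (p:ℚ_[p]) ^ γ)⁻¹ - (j':ℚ_[p]))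
          from by ring]
      exact le_trans (padic_sub_le p _ _) (max_le hC2 hC2')
    have hjeq : j' = j := by
      have hdvd : (p:ℤ) ∣ ((j':ℤ) - (j:ℤ)) := by
        rw [← Padic.norm_intCast_lt_one_iff (p := p)]
        push_cast
        exact lt_of_le_of_lt hjj hpinvlt
      have habs : |((j':ℤ) - (j:ℤ))| < p := by
        rw [abs_lt]
        omega
      have := Int.eq_zero_of_abs_lt_dvd hdvd habs
      omega
    rw [hjeq] at hC4'
    have hneq : n' = n := by
      apply rset_unique p hn'R hnR
      rw [show n' - n = ((p:ℚ_[p]) ^ γ * b - n) - ((p:ℚ_[p]) ^ γ * b - n') from by ring]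
      exact le_trans (padic_sub_le p _ _) (max_le hC3 hC3')
    rw [hneq] at hC4'
    have hmeq : m' = m := by
      have hmm : ‖((m':ℚ_[p])) - (m:ℚ_[p])‖ ≤ (p:ℝ) ^ (-1:ℤ) := by
        rw [show (m':ℚ_[p]) - (m:ℚ_[p])
            = ((m':ℚ_[p]) - (j:ℚ_[p]) * (n - (p:ℚ_[p]) ^ γ * b))
              - ((m:ℚ_[p]) - (j:ℚ_[p]) * (n - (p:ℚ_[p]) ^ γ * b)) from by ring]
        exact le_trans (padic_sub_le p _ _) (max_le hC4' hC4)
      have hdvd : (p:ℤ) ∣ ((m':ℤ) - (m:ℤ)) := by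
        rw [← Padic.norm_intCast_lt_one_iff (p := p)]
        push_cast
        exact lt_of_le_of_lt hmm hpinvlt
      have habs : |((m':ℤ) - (m:ℤ))| < p := by
        rw [abs_lt]
        omega
      have := Int.eq_zero_of_abs_lt_dvd hdvd habs
      omega
    simp only [Prod.mk.injEq]
    exact ⟨hγeq, hjeq, hneq, hmeq⟩
  · intro γ j n m _ _ _
    exact main_iff p χ hχ_add hχ_norm hχ_triv hχ_nontriv a b ha γ j n m
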